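/- Let p be a prime and let λ_1 > λ_2 ≥ 1 be integers; write r := λ_1 − λ_2 with base-p digits r_i. Then λ_2 = Σ_{i=0}^{u−1} r̅_i p^i + p^{u+a} for some u ≥ 0 and a ≥ 1 with r_u ≠ p − 1 if and only if (λ_1, λ_2) satisfies condition (ii). (This is the equivalence established in equation (5.4): membership of λ_2 in the first subset of Ψ_p(λ_1 − λ_2).) -/

import Mathlib

/-- The `i`-th base-`p` digit of `r`. -/
def pdigit (p r i : ℕ) : ℕ := (r / p ^ i) % p

/-- For a base-`p` digit `a`, `pbar p a = p - 1 - a` is the unique `a̅` with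
`0 ≤ a̅ ≤ p - 1` and `a + a̅ ≡ p - 1 (mod p)`. -/
def pbar (p a : ℕ) : ℕ := p - 1 - a

/-- Condition (ii) of Proposition 5.4: there is `u ≥ 0` with `λ₁ ≡ -1 (mod p^u)`,
`λ₁ ≢ -1 (mod p^(u+1))`, and `λ₂ = c + p^b` with `0 ≤ c < p^u` and `b > u`. -/
def CondII (p l1 l2 : ℕ) : Prop :=
  ∃ u : ℕ, p ^ u ∣ l1 + 1 ∧ ¬ p ^ (u + 1) ∣ l1 + 1 ∧
    ∃ c b : ℕ, c < p ^ u ∧ u < b ∧ l2 = c + p ^ b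

lemma mod_eq_sub_one_iff {p : ℕ} (hp : 1 < p) (q : ℕ) :
    q % p = p - 1 ↔ p ∣ q + 1 := by
  constructor
  · intro h
    refine ⟨q / p + 1, ?_⟩
    have hdm := Nat.div_add_mod q p
    rw [Nat.mul_add, Nat.mul_one]
    omega
  · rintro ⟨k, hk⟩
    rcases k with _ | k
    · omega
    · have hq : q = p * k + (p - 1) := by rw [Nat.mul_succ] at hk; omega
      rw [hq, Nat.mul_add_mod, Nat.mod_eq_of_lt (by omega)]

/-- Key identity: the complementary digit sum below `u` plus `r % p^u` plus 1 is `p^u`. -/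
lemma key_sum {p : ℕ} (hp : 1 < p) (r u : ℕ) :
    (∑ i ∈ Finset.range u, pbar p (pdigit p r i) * p ^ i) + r % p ^ u + 1 = p ^ u := by
  induction u with
  | zero => simp [Nat.mod_one]
  | succ u ih =>
    rw [Finset.sum_range_succ, Nat.mod_pow_succ, pow_succ]
    simp only [pdigit, pbar] at *
    have hd : r / p ^ u % p < p := Nat.mod_lt _ (by omega)
    have h1 : (p - 1 - r / p ^ u % p) * p ^ u + p ^ u * (r / p ^ u % p) + p ^ u
        = p ^ u * p := by
      have h2 : (p - 1 - r / p ^ u % p) + r / p ^ u % p + 1 = p := by omega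
      calc (p - 1 - r / p ^ u % p) * p ^ u + p ^ u * (r / p ^ u % p) + p ^ u
          = ((p - 1 - r / p ^ u % p) + r / p ^ u % p + 1) * p ^ u := by ring
        _ = p * p ^ u := by rw [h2]
        _ = p ^ u * p := by ring
    have := Nat.mod_lt r (show 0 < p ^ u by positivity)
    omega

theorem first_subset_iff_condII (p l1 l2 : ℕ) (hp : p.Prime)
    (h12 : l2 < l1) (h2 : 1 ≤ l2) :
    (∃ u a : ℕ, 1 ≤ a ∧ pdigit p (l1 - l2) u ≠ p - 1 ∧
        l2 = (∑ i ∈ Finset.range u, pbar p (pdigit p (l1 - l2) i) * p ^ i) + p ^ (u + a)) ↔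
      CondII p l1 l2 := by
  have hp1 : 1 < p := hp.one_lt
  set r := l1 - l2 with hr
  have hrl : r + l2 = l1 := by omega
  constructor
  · rintro ⟨u, a, ha, hdig, hl2⟩
    have hk := key_sum hp1 r u
    obtain ⟨S, hS⟩ : ∃ S, ∑ i ∈ Finset.range u, pbar p (pdigit p r i) * p ^ i = S :=
      ⟨_, rfl⟩
    rw [hS] at hk hl2
    have hdm := Nat.div_add_mod r (p ^ u)
    set q := r / p ^ u with hq
    obtain ⟨rm, hrm⟩ : ∃ x, r % p ^ u = x := ⟨_, rfl⟩
    rw [hrm] at hk hdm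
    have hfact : l1 + 1 = p ^ u * (q + 1 + p ^ a) := by
      have e1 : p ^ u * (q + 1 + p ^ a) = p ^ u * q + p ^ u + p ^ u * p ^ a := by ring
      have e2 : p ^ (u + a) = p ^ u * p ^ a := pow_add p u a
      rw [e1, ← e2]
      omega
    have hSlt : S < p ^ u := by omega
    have hab : u < u + a := by omega
    refine ⟨u, ⟨q + 1 + p ^ a, hfact⟩, ?_, S, u + a, hSlt, hab, hl2⟩
    rintro ⟨k, hk2⟩
    rw [hfact, pow_succ] at hk2
    have hpu : 0 < p ^ u := by positivity
    have hdvd : p ∣ q + 1 + p ^ a := by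
      refine ⟨k, ?_⟩
      have : p ^ u * (q + 1 + p ^ a) = p ^ u * (p * k) := by rw [hk2]; ring
      exact Nat.eq_of_mul_eq_mul_left hpu this
    have hpa : p ∣ p ^ a := dvd_pow_self p (by omega)
    have : p ∣ q + 1 := by
      have h3 := Nat.dvd_sub hdvd hpa
      simpa using h3
    exact hdig ((mod_eq_sub_one_iff hp1 q).mpr this)
  · rintro ⟨u, ⟨m, hm⟩, hndvd, c, b, hc, hub, hl2⟩
    have hpu : 0 < p ^ u := by positivity
    have hpm : ¬ p ∣ m := by
      intro ⟨k, hk⟩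
      exact hndvd ⟨k, by rw [hm, hk, pow_succ]; ring⟩
    have hpow : p ^ b = p ^ u * p ^ (b - u) := by
      rw [← pow_add]; congr 1; omega
    have heq : r + c + p ^ u * p ^ (b - u) + 1 = p ^ u * m := by
      rw [← hpow]; omega
    have hmt : p ^ (b - u) < m := by
      by_contra h
      have : p ^ u * m ≤ p ^ u * p ^ (b - u) := Nat.mul_le_mul_left _ (by omega)
      omega
    set t := m - p ^ (b - u) with ht
    have ht1 : 1 ≤ t := by omega
    have heq2 : r + c + 1 = p ^ u * t := by
      have : p ^ u * m = p ^ u * p ^ (b - u) + p ^ u * t := by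
        rw [ht, ← Nat.mul_add]; congr 1; omega
      omega
    have hdecomp : r = p ^ u * (t - 1) + (p ^ u - 1 - c) := by
      have : p ^ u * t = p ^ u * (t - 1) + p ^ u := by
        conv_lhs => rw [show t = (t - 1) + 1 by omega]
        ring
      omega
    have hmod : r % p ^ u = p ^ u - 1 - c := by
      rw [hdecomp, Nat.mul_add_mod, Nat.mod_eq_of_lt (by omega)]
    have hdiv : r / p ^ u = t - 1 := by
      rw [hdecomp, Nat.mul_add_div hpu, Nat.div_eq_of_lt (by omega), Nat.add_zero]
    have hk := key_sum hp1 r u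
    obtain ⟨S, hS⟩ : ∃ S, ∑ i ∈ Finset.range u, pbar p (pdigit p r i) * p ^ i = S :=
      ⟨_, rfl⟩
    rw [hS, hmod] at hk
    have hSc : S = c := by omega
    refine ⟨u, b - u, by omega, ?_, ?_⟩
    · intro hdig
      have : p ∣ (t - 1) + 1 := by
        rw [← hdiv]
        exact (mod_eq_sub_one_iff hp1 _).mp hdig
      have hpt : p ∣ t := by rwa [Nat.sub_add_cancel ht1] at this
      have hpb : p ∣ p ^ (b - u) := dvd_pow_self p (by omega)
      have : p ∣ m := by
        have : p ∣ t + p ^ (b - u) := Nat.dvd_add hpt hpb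
        rwa [show t + p ^ (b - u) = m by omega] at this
      exact hpm this
    · rw [hS, hSc, show u + (b - u) = b by omega, hl2]
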